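/- arXiv:1203.0704 — 3 statements merged into one kernel-verified Lean document; each statement's English description precedes it below -/
import Mathlib

section
/- Let G be a transitive permutation group on a finite set X, and let H be a transitive permutation group on a finite set Y. Let B be the partition of X × Y into the sets {x} × Y (the orbits of the subgroup 1 ≀ H of G ≀ H). If C is any (G ≀ H)-invariant partition of X × Y, then either every block of B is contained in a block of C, or every block of C is contained in a block of B. -/
open Equiv

/-- A quotient-style block lemma: for wreath products, any invariant partition is
comparable with the partition into fibers `{x} × Y`. -/
theorem stmt_0 {X Y : Type*} [Fintype X] [Fintype Y]
    (G : Subgroup (Perm X)) (H : Subgroup (Perm Y))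
    (hG : ∀ x x' : X, ∃ g ∈ G, g x = x')
    (hH : ∀ y y' : Y, ∃ h ∈ H, h y = y')
    (C : Set (Set (X × Y)))
    (hCne : ∀ c ∈ C, c.Nonempty)
    (hCcov : ∀ p : X × Y, ∃ c ∈ C, p ∈ c)
    (hCdis : ∀ c ∈ C, ∀ c' ∈ C, (c ∩ c').Nonempty → c = c')
    (hCinv : ∀ f : Perm (X × Y),
      (∃ g ∈ G, ∃ h : X → Perm Y, (∀ x, h x ∈ H) ∧
        ∀ p : X × Y, f p = (g p.1, h p.1 p.2)) →
      ∀ c ∈ C, f '' c ∈ C) :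
    (∀ x : X, ∃ c ∈ C, ({x} ×ˢ (Set.univ : Set Y)) ⊆ c) ∨
    (∀ c ∈ C, ∃ x : X, c ⊆ ({x} ×ˢ (Set.univ : Set Y))) := by
  classical
  by_cases hcase : ∀ c ∈ C, ∀ p ∈ c, ∀ q ∈ c, (p : X × Y).1 = q.1
  · right
    intro c hc
    obtain ⟨p, hp⟩ := hCne c hc
    refine ⟨p.1, fun q hq => ?_⟩
    simp only [Set.mem_prod, Set.mem_singleton_iff, Set.mem_univ, and_true]
    exact hcase c hc q hq p hp
  · left
    push_neg at hcase
    obtain ⟨c, hc, p, hp, q, hq, hpq⟩ := hcase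
    have key : ∀ y : Y, (p.1, y) ∈ c := by
      intro y
      obtain ⟨h, hHh, hy⟩ := hH p.2 y
      set hx : X → Perm Y := fun x => if x = p.1 then h else 1 with hhx
      set f : Perm (X × Y) := Equiv.prodShear (1 : Perm X) hx with hf
      have hfc : f '' c ∈ C := by
        refine hCinv f ⟨1, one_mem G, hx, fun x => ?_, fun p' => rfl⟩ c hc
        by_cases hx1 : x = p.1 <;> simp [hhx, hx1, hHh, one_mem]
      have hqf : f q = q := by
        have : hx q.1 = 1 := if_neg (Ne.symm hpq)
        simp [hf, Equiv.prodShear, this]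
      have hceq : c = f '' c :=
        hCdis c hc _ hfc ⟨q, hq, ⟨q, hq, hqf⟩⟩
      have : f p ∈ f '' c := ⟨p, hp, rfl⟩
      rw [← hceq] at this
      have hfp : f p = (p.1, y) := by
        have h1 : hx p.1 = h := if_pos rfl
        simp [hf, Equiv.prodShear, h1, hy]
      rwa [hfp] at this
    intro x
    obtain ⟨g, hg, hgx⟩ := hG p.1 x
    set f : Perm (X × Y) := Equiv.prodShear g (fun _ => (1 : Perm Y)) with hf
    refine ⟨f '' c, hCinv f ⟨g, hg, fun _ => 1, fun _ => one_mem H, fun p' => rfl⟩ c hc, ?_⟩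
    rintro ⟨x', y⟩ hxy
    simp only [Set.mem_prod, Set.mem_singleton_iff, Set.mem_univ, and_true] at hxy
    subst hxy
    exact ⟨(p.1, y), key y, by simp [hf, Equiv.prodShear, hgx]⟩
end

section
/- Every quotient group of a finite CI-group with respect to digraphs is a CI-group with respect to digraphs. That is, if G is a finite group such that for all S, S' ⊆ G, Cay(G,S) ≅ Cay(G,S') implies α(S) = S' for some α ∈ Aut(G), and H is a normal subgroup of G, then G/H has the same property. -/
open Equiv Pointwise

section AuxCI

variable {G : Type*} [Group G]

/-- `N` is a "factor" of the set `Y`: a normal subgroup contained in `Y` such that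
`Y \\ N` is (right-)saturated with respect to `N`. -/
def IsFac (Y : Set G) (N : Subgroup G) : Prop :=
  N.Normal ∧ (N : Set G) ⊆ Y ∧ ∀ y ∈ Y, y ∉ N → ∀ n ∈ N, y * n ∈ Y ∧ y * n ∉ N

theorem IsFac.sup {Y : Set G} {N₁ N₂ : Subgroup G} (h₁ : IsFac Y N₁) (h₂ : IsFac Y N₂) :
    IsFac Y (N₁ ⊔ N₂) := by
  haveI := h₁.1; haveI := h₂.1
  have hmem : ∀ x : G, x ∈ N₁ ⊔ N₂ → ∃ a ∈ N₁, ∃ b ∈ N₂, a * b = x := by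
    intro x hx
    have hx2 : x ∈ (↑(N₁ ⊔ N₂) : Set G) := hx
    rw [Subgroup.mul_normal N₁ N₂] at hx2
    simpa [Set.mem_mul] using hx2
  refine ⟨Subgroup.sup_normal N₁ N₂, ?_, ?_⟩
  · intro x hx
    obtain ⟨a, ha, b, hb, rfl⟩ := hmem x hx
    by_cases hab : a ∈ N₂
    · exact h₂.2.1 (mul_mem hab hb)
    · exact (h₂.2.2 a (h₁.2.1 ha) hab b hb).1
  · intro y hy hyN n hn
    obtain ⟨a, ha, b, hb, rfl⟩ := hmem n hn
    have hyN₁ : y ∉ N₁ := fun h => hyN (Subgroup.mem_sup_left h)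
    have h1 := h₁.2.2 y hy hyN₁ a ha
    have hyaN : y * a ∉ N₁ ⊔ N₂ := by
      intro h
      exact hyN (by simpa [mul_assoc] using mul_mem h (inv_mem (Subgroup.mem_sup_left ha)))
    have hyaN₂ : y * a ∉ N₂ := fun h => hyaN (Subgroup.mem_sup_right h)
    have h2 := h₂.2.2 (y * a) h1.1 hyaN₂ b hb
    refine ⟨by simpa [mul_assoc] using h2.1, ?_⟩
    intro h
    rw [← mul_assoc] at h
    exact hyaN (by simpa [mul_assoc] using mul_mem h (inv_mem (Subgroup.mem_sup_right hb)))

/-- The join of all factors of `Y` is a factor of `Y` (assuming there is at least one). -/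
theorem isFac_sSup {Y : Set G} {H : Subgroup G} (hH : IsFac Y H) :
    IsFac Y (sSup {N : Subgroup G | IsFac Y N}) := by
  set K : Set (Subgroup G) := {N : Subgroup G | IsFac Y N} with hK
  have hKne : K.Nonempty := ⟨H, hH⟩
  have hdir : DirectedOn (· ≤ ·) K := fun N₁ h₁ N₂ h₂ =>
    ⟨N₁ ⊔ N₂, IsFac.sup h₁ h₂, le_sup_left, le_sup_right⟩
  have hmem : ∀ x : G, x ∈ sSup K ↔ ∃ N ∈ K, x ∈ N := fun x =>
    Subgroup.mem_sSup_of_directedOn hKne hdir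
  refine ⟨⟨fun n hn g => ?_⟩, fun x hx => ?_, fun y hy hyP n hn => ?_⟩
  · obtain ⟨N, hN, hnN⟩ := (hmem n).mp hn
    exact (hmem _).mpr ⟨N, hN, hN.1.conj_mem n hnN g⟩
  · obtain ⟨N, hN, hxN⟩ := (hmem x).mp hx
    exact hN.2.1 hxN
  · obtain ⟨N, hN, hnN⟩ := (hmem n).mp hn
    have hyN : y ∉ N := fun h => hyP ((hmem y).mpr ⟨N, hN, h⟩)
    have h1 := hN.2.2 y hy hyN n hnN
    refine ⟨h1.1, fun h => ?_⟩
    obtain ⟨N', hN', hN'mem⟩ := (hmem _).mp h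
    have hsup : IsFac Y (N ⊔ N') := IsFac.sup hN hN'
    have hyn : y * n ∈ N ⊔ N' := Subgroup.mem_sup_right hN'mem
    have hy2 : y ∈ N ⊔ N' := by
      simpa [mul_assoc] using mul_mem hyn (inv_mem (Subgroup.mem_sup_left hnN))
    exact hyP ((hmem y).mpr ⟨N ⊔ N', hsup, hy2⟩)

/-- Key decoding lemma: the left stabilizer of `X` is contained in `H`. -/
theorem stab_le {G : Type*} [Group G] [Fintype G] (X : Set G) (hX1 : (1 : G) ∉ X)
    (H P : Subgroup G)
    (hPX : ∀ p ∈ P, p ∉ H → p ∈ X)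
    (hPsat : ∀ x ∈ X, x ∉ P → ∀ p ∈ P, x * p ∈ X)
    (hpr : ∃ p ∈ P, p ∉ H) (s : G) (hs : ∀ x ∈ X, s * x ∈ X) : s ∈ H := by
  by_contra hsH
  have hsX : s ∈ X := by
    by_cases hsP : s ∈ P
    · exact hPX s hsP hsH
    · obtain ⟨p₀, hp₀P, hp₀H⟩ := hpr
      have hz : s * p₀ ∈ X := hs _ (hPX _ hp₀P hp₀H)
      have hzP : s * p₀ ∉ P := fun h =>
        hsP (by simpa [mul_assoc] using mul_mem h (inv_mem hp₀P))
      have h2 := hPsat _ hz hzP _ (inv_mem hp₀P)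
      simpa [mul_assoc] using h2
  have hpow : ∀ k : ℕ, s ^ (k + 1) ∈ X := by
    intro k
    induction k with
    | zero => simpa using hsX
    | succ n ih =>
      have h3 := hs _ ih
      rw [← pow_succ'] at h3
      exact h3
  have h1 : (1 : G) ∈ X := by
    have h4 := hpow (orderOf s - 1)
    have hpos : 0 < orderOf s := orderOf_pos s
    rw [Nat.sub_add_cancel hpos, pow_orderOf_eq_one] at h4
    exact h4
  exact hX1 h1

/-- Transport of factors along a group isomorphism. -/
theorem IsFac.mapEquiv {Y Y' : Set G} (beta : G ≃* G) (hY : beta '' Y = Y')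
    {N : Subgroup G} (h : IsFac Y N) : IsFac Y' (N.map beta.toMonoidHom) := by
  have hcoe : ((N.map beta.toMonoidHom : Subgroup G) : Set G) = beta '' (N : Set G) :=
    Subgroup.coe_map _ _
  refine ⟨h.1.map _ beta.surjective, ?_, ?_⟩
  · rw [hcoe, ← hY]
    exact Set.image_mono h.2.1
  · intro y' hy' hy'N n' hn'
    obtain ⟨y, hy, rfl⟩ : ∃ y ∈ Y, beta y = y' := by
      rw [← hY] at hy'; exact hy'
    obtain ⟨n, hn, rfl⟩ : ∃ n ∈ N, beta n = n' := by
      rw [Subgroup.mem_map] at hn'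
      obtain ⟨n, hn, hn2⟩ := hn'
      exact ⟨n, hn, hn2⟩
    have hyN : y ∉ N := by
      intro hc
      exact hy'N (Subgroup.mem_map.mpr ⟨y, hc, rfl⟩)
    have h1 := h.2.2 y hy hyN n hn
    constructor
    · rw [← map_mul, ← hY]
      exact Set.mem_image_of_mem _ h1.1
    · intro hc
      rw [← map_mul, Subgroup.mem_map_equiv] at hc
      simp only [MulEquiv.symm_apply_apply] at hc
      exact h1.2 hc

end AuxCI

/-- A quotient of a finite CI-group with respect to digraphs is a CI-group with
respect to digraphs. -/
theorem stmt_6 {G : Type*} [Group G] [Fintype G]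
    (hCI : ∀ S S' : Set G,
      (∃ e : Perm G, ∀ a b : G, a⁻¹ * b ∈ S ↔ (e a)⁻¹ * (e b) ∈ S') →
      ∃ α : G ≃* G, α '' S = S')
    (H : Subgroup G) [H.Normal] :
    ∀ S S' : Set (G ⧸ H),
      (∃ e : Perm (G ⧸ H), ∀ a b : G ⧸ H, a⁻¹ * b ∈ S ↔ (e a)⁻¹ * (e b) ∈ S') →
      ∃ α : (G ⧸ H) ≃* (G ⧸ H), α '' S = S' := by
  rintro S S' ⟨e, he⟩
  classical
  have h1iff : ((1 : G ⧸ H) ∈ S) ↔ ((1 : G ⧸ H) ∈ S') := by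
    simpa using he 1 1
  set X : Set G := {g : G | ((g : G ⧸ H) ∈ S) ∧ ((g : G ⧸ H) ≠ 1)} with hXdef
  set X' : Set G := {g : G | ((g : G ⧸ H) ∈ S') ∧ ((g : G ⧸ H) ≠ 1)} with hX'def
  -- the block permutation E of G induced by e
  have hmk1 : ∀ g : G, ((((e (g : G ⧸ H)).out * ((g : G ⧸ H)).out⁻¹ * g : G)) : G ⧸ H)
      = e (g : G ⧸ H) := by
    intro g
    rw [QuotientGroup.mk_mul, QuotientGroup.mk_mul, QuotientGroup.mk_inv,
      QuotientGroup.out_eq', QuotientGroup.out_eq']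
    group
  have hmk2 : ∀ g : G, ((((e.symm (g : G ⧸ H)).out * ((g : G ⧸ H)).out⁻¹ * g : G)) : G ⧸ H)
      = e.symm (g : G ⧸ H) := by
    intro g
    rw [QuotientGroup.mk_mul, QuotientGroup.mk_mul, QuotientGroup.mk_inv,
      QuotientGroup.out_eq', QuotientGroup.out_eq']
    group
  set E : Perm G :=
    { toFun := fun g => (e (g : G ⧸ H)).out * ((g : G ⧸ H)).out⁻¹ * g
      invFun := fun g => (e.symm (g : G ⧸ H)).out * ((g : G ⧸ H)).out⁻¹ * g
      left_inv := by
        intro g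
        simp only [hmk1, Equiv.symm_apply_apply]
        group
      right_inv := by
        intro g
        simp only [hmk2, Equiv.apply_symm_apply]
        group } with hEdef
  have hEmk : ∀ g : G, ((E g : G) : G ⧸ H) = e (g : G ⧸ H) := hmk1
  have hEq : ∀ a b : G, (((E a)⁻¹ * E b : G) : G ⧸ H) = (e (a : G ⧸ H))⁻¹ * e (b : G ⧸ H) := by
    intro a b
    rw [QuotientGroup.mk_mul, QuotientGroup.mk_inv, hEmk, hEmk]
  have habX : ∀ a b : G, (a⁻¹ * b ∈ X) ↔ ((a : G ⧸ H)⁻¹ * (b : G ⧸ H) ∈ S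
      ∧ (a : G ⧸ H)⁻¹ * (b : G ⧸ H) ≠ 1) := by
    intro a b
    have h0 : ((a⁻¹ * b : G) : G ⧸ H) = (a : G ⧸ H)⁻¹ * (b : G ⧸ H) := by
      rw [QuotientGroup.mk_mul, QuotientGroup.mk_inv]
    rw [hXdef]
    simp only [Set.mem_setOf_eq, h0]
  have habX' : ∀ a b : G, (a⁻¹ * b ∈ X') ↔ ((a : G ⧸ H)⁻¹ * (b : G ⧸ H) ∈ S'
      ∧ (a : G ⧸ H)⁻¹ * (b : G ⧸ H) ≠ 1) := by
    intro a b
    have h0 : ((a⁻¹ * b : G) : G ⧸ H) = (a : G ⧸ H)⁻¹ * (b : G ⧸ H) := by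
      rw [QuotientGroup.mk_mul, QuotientGroup.mk_inv]
    rw [hX'def]
    simp only [Set.mem_setOf_eq, h0]
  have hserveX : ∀ a b : G, a⁻¹ * b ∈ X ↔ (E a)⁻¹ * (E b) ∈ X' := by
    intro a b
    rw [habX a b]
    have h2 : ((E a)⁻¹ * E b ∈ X') ↔ ((e (a : G ⧸ H))⁻¹ * e (b : G ⧸ H) ∈ S'
        ∧ (e (a : G ⧸ H))⁻¹ * e (b : G ⧸ H) ≠ 1) := by
      rw [habX' (E a) (E b), hEmk a, hEmk b]
    rw [h2]
    constructor
    · rintro ⟨h3, h4⟩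
      refine ⟨(he _ _).mp h3, ?_⟩
      rw [Ne, inv_mul_eq_one] at h4 ⊢
      exact fun hc => h4 (e.injective hc)
    · rintro ⟨h3, h4⟩
      refine ⟨(he _ _).mpr h3, ?_⟩
      rw [Ne, inv_mul_eq_one] at h4 ⊢
      exact fun hc => h4 (by rw [hc])
  have hserveH : ∀ a b : G, a⁻¹ * b ∈ H ↔ (E a)⁻¹ * (E b) ∈ H := by
    intro a b
    rw [← QuotientGroup.eq_one_iff, ← QuotientGroup.eq_one_iff, hEq a b,
      QuotientGroup.mk_mul, QuotientGroup.mk_inv, inv_mul_eq_one, inv_mul_eq_one]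
    exact ⟨fun h => by rw [h], fun h => e.injective h⟩
  -- first application of CI: the sets T₁
  set T₁ : Set G := X ∪ ((H : Set G) \ {1}) with hT₁def
  set T₁' : Set G := X' ∪ ((H : Set G) \ {1}) with hT₁'def
  have hserveT : ∀ a b : G, a⁻¹ * b ∈ T₁ ↔ (E a)⁻¹ * (E b) ∈ T₁' := by
    intro a b
    rw [hT₁def, hT₁'def]
    simp only [Set.mem_union, Set.mem_diff, Set.mem_singleton_iff]
    have h5 : (a⁻¹ * b = 1) ↔ ((E a)⁻¹ * E b = 1) := by
      rw [inv_mul_eq_one, inv_mul_eq_one]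
      exact ⟨fun h => by rw [h], fun h => E.injective h⟩
    have h6 : (a⁻¹ * b ∈ (H : Set G)) ↔ ((E a)⁻¹ * E b ∈ (H : Set G)) := hserveH a b
    rw [hserveX a b]
    tauto
  obtain ⟨α₂, hα₂⟩ := hCI T₁ T₁' ⟨E, hserveT⟩
  obtain ⟨α, hα⟩ := hCI X X' ⟨E, hserveX⟩
  -- basic facts
  have hX1 : (1 : G) ∉ X := fun hc => hc.2 rfl
  have hX1' : (1 : G) ∉ X' := fun hc => hc.2 rfl
  have hXH : ∀ g ∈ X, g ∉ H := by
    intro g hg hc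
    exact hg.2 ((QuotientGroup.eq_one_iff g).mpr hc)
  have hXH' : ∀ g ∈ X', g ∉ H := by
    intro g hg hc
    exact hg.2 ((QuotientGroup.eq_one_iff g).mpr hc)
  set Y : Set G := X ∪ (H : Set G) with hYdef
  set Y' : Set G := X' ∪ (H : Set G) with hY'def
  have hYX : Y \ (H : Set G) = X := by
    rw [hYdef]
    ext g
    simp only [Set.mem_diff, Set.mem_union, SetLike.mem_coe]
    exact ⟨fun ⟨h1, h2⟩ => h1.resolve_right h2, fun h => ⟨Or.inl h, hXH g h⟩⟩
  have hY'X : Y' \ (H : Set G) = X' := by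
    rw [hY'def]
    ext g
    simp only [Set.mem_diff, Set.mem_union, SetLike.mem_coe]
    exact ⟨fun ⟨h1, h2⟩ => h1.resolve_right h2, fun h => ⟨Or.inl h, hXH' g h⟩⟩
  have hTY : T₁ ∪ {1} = Y := by
    rw [hT₁def, hYdef]
    ext g
    simp only [Set.mem_union, Set.mem_diff, Set.mem_singleton_iff, SetLike.mem_coe]
    constructor
    · rintro ((h | ⟨h, _⟩) | rfl)
      · exact Or.inl h
      · exact Or.inr h
      · exact Or.inr (one_mem H)
    · rintro (h | h)
      · exact Or.inl (Or.inl h)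
      · by_cases hg : g = 1
        · exact Or.inr hg
        · exact Or.inl (Or.inr ⟨h, hg⟩)
  have hTY' : T₁' ∪ {1} = Y' := by
    rw [hT₁'def, hY'def]
    ext g
    simp only [Set.mem_union, Set.mem_diff, Set.mem_singleton_iff, SetLike.mem_coe]
    constructor
    · rintro ((h | ⟨h, _⟩) | rfl)
      · exact Or.inl h
      · exact Or.inr h
      · exact Or.inr (one_mem H)
    · rintro (h | h)
      · exact Or.inl (Or.inl h)
      · by_cases hg : g = 1
        · exact Or.inr hg
        · exact Or.inl (Or.inr ⟨h, hg⟩)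
  have hα₂Y : (α₂ : G → G) '' Y = Y' := by
    rw [← hTY, ← hTY', Set.image_union, hα₂]
    congr 1
    rw [Set.image_singleton, map_one]
  -- factor subgroups
  have hHfacY : IsFac Y H := by
    refine ⟨inferInstance, Set.subset_union_right, ?_⟩
    intro y hy hyH n hn
    have hyX : y ∈ X := by
      rcases hy with h | h
      · exact h
      · exact absurd h hyH
    have hmkn : ((y * n : G) : G ⧸ H) = (y : G ⧸ H) := by
      rw [QuotientGroup.mk_mul, (QuotientGroup.eq_one_iff n).mpr hn, mul_one]
    have hynX : y * n ∈ X := by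
      rw [hXdef] at hyX ⊢
      exact ⟨by rw [hmkn]; exact hyX.1, by rw [hmkn]; exact hyX.2⟩
    exact ⟨Or.inl hynX, hXH _ hynX⟩
  have hHfacY' : IsFac Y' H := by
    refine ⟨inferInstance, Set.subset_union_right, ?_⟩
    intro y hy hyH n hn
    have hyX : y ∈ X' := by
      rcases hy with h | h
      · exact h
      · exact absurd h hyH
    have hmkn : ((y * n : G) : G ⧸ H) = (y : G ⧸ H) := by
      rw [QuotientGroup.mk_mul, (QuotientGroup.eq_one_iff n).mpr hn, mul_one]
    have hynX : y * n ∈ X' := by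
      rw [hX'def] at hyX ⊢
      exact ⟨by rw [hmkn]; exact hyX.1, by rw [hmkn]; exact hyX.2⟩
    exact ⟨Or.inl hynX, hXH' _ hynX⟩
  set P : Subgroup G := sSup {N : Subgroup G | IsFac Y N} with hPdef
  set P' : Subgroup G := sSup {N : Subgroup G | IsFac Y' N} with hP'def
  have hPfac : IsFac Y P := isFac_sSup hHfacY
  have hP'fac : IsFac Y' P' := isFac_sSup hHfacY'
  have hHP : H ≤ P := le_sSup hHfacY
  have hHP' : H ≤ P' := le_sSup hHfacY'
  have hα₂symmY : (α₂.symm : G → G) '' Y' = Y := by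
    rw [← hα₂Y, Set.image_image]
    simp
  have hPmap : P.map α₂.toMonoidHom = P' := by
    apply le_antisymm
    · exact le_sSup (hPfac.mapEquiv α₂ hα₂Y)
    · intro x hx
      have h6 : α₂.symm x ∈ P'.map α₂.symm.toMonoidHom :=
        Subgroup.mem_map.mpr ⟨x, hx, rfl⟩
      have h7 : P'.map α₂.symm.toMonoidHom ≤ P := le_sSup (hP'fac.mapEquiv α₂.symm hα₂symmY)
      exact Subgroup.mem_map.mpr ⟨α₂.symm x, h7 h6, by simp⟩
  -- obtain the H-preserving automorphism σ
  obtain ⟨σ, hσH, hσX⟩ : ∃ σ : G ≃* G, (σ : G → G) '' (H : Set G) = (H : Set G)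
      ∧ (σ : G → G) '' X = X' := by
    by_cases hcase : H = P
    · refine ⟨α₂, ?_, ?_⟩
      · have hset : (P' : Set G) = (α₂ : G → G) '' (H : Set G) := by
          rw [← hPmap, Subgroup.coe_map, ← hcase]
          rfl
        have hsub : (H : Set G) ⊆ (P' : Set G) := hHP'
        have hcard : ((P' : Set G)).ncard ≤ ((H : Set G)).ncard := by
          rw [hset, Set.ncard_image_of_injective _ α₂.injective]
        have h12 := Set.eq_of_subset_of_ncard_le hsub hcard (Set.toFinite _)
        rw [← hset, ← h12]
      · rw [← hYX, Set.image_diff α₂.injective, hα₂Y]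
        have hset : (α₂ : G → G) '' (H : Set G) = (H : Set G) := by
          have hset2 : (P' : Set G) = (α₂ : G → G) '' (H : Set G) := by
            rw [← hPmap, Subgroup.coe_map, ← hcase]
            rfl
          have hsub : (H : Set G) ⊆ (P' : Set G) := hHP'
          have hcard : ((P' : Set G)).ncard ≤ ((H : Set G)).ncard := by
            rw [hset2, Set.ncard_image_of_injective _ α₂.injective]
          have h12 := Set.eq_of_subset_of_ncard_le hsub hcard (Set.toFinite _)
          rw [← hset2, ← h12]
        rw [hset, hY'X]
    · have hlt : H < P := lt_of_le_of_ne hHP hcase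
      obtain ⟨p₀, hp₀P, hp₀H⟩ := SetLike.exists_of_lt hlt
      -- stabilizer characterizations
      have hstab : ∀ s : G, (∀ x ∈ X, s * x ∈ X) ↔ s ∈ H := by
        intro s
        constructor
        · intro hs
          refine stab_le X hX1 H P ?_ ?_ ⟨p₀, hp₀P, hp₀H⟩ s hs
          · intro p hp hpH
            rcases hPfac.2.1 hp with h | h
            · exact h
            · exact absurd h hpH
          · intro x hx hxP p hp
            have h8 := hPfac.2.2 x (Or.inl hx) hxP p hp
            rcases h8.1 with h | h
            · exact h
            · exact absurd (hHP h) h8.2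
        · intro hs x hx
          have hmks : ((s * x : G) : G ⧸ H) = (x : G ⧸ H) := by
            rw [QuotientGroup.mk_mul, (QuotientGroup.eq_one_iff s).mpr hs, one_mul]
          exact ⟨by rw [hmks]; exact hx.1, by rw [hmks]; exact hx.2⟩
      have hcardPP' : ((P' : Set G)).ncard = ((P : Set G)).ncard := by
        rw [← hPmap, Subgroup.coe_map]
        exact Set.ncard_image_of_injective _ α₂.injective
      have hne' : H ≠ P' := by
        intro hc
        have h9 : ((H : Set G)).ncard < ((P : Set G)).ncard :=
          Set.ncard_lt_ncard (SetLike.coe_strictMono hlt) (Set.toFinite _)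
        rw [hc, hcardPP'] at h9
        exact lt_irrefl _ h9
      have hlt' : H < P' := lt_of_le_of_ne hHP' hne'
      obtain ⟨p₀', hp₀'P, hp₀'H⟩ := SetLike.exists_of_lt hlt'
      have hstab' : ∀ s : G, (∀ x ∈ X', s * x ∈ X') ↔ s ∈ H := by
        intro s
        constructor
        · intro hs
          refine stab_le X' hX1' H P' ?_ ?_ ⟨p₀', hp₀'P, hp₀'H⟩ s hs
          · intro p hp hpH
            rcases hP'fac.2.1 hp with h | h
            · exact h
            · exact absurd h hpH
          · intro x hx hxP p hp
            have h8 := hP'fac.2.2 x (Or.inl hx) hxP p hp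
            rcases h8.1 with h | h
            · exact h
            · exact absurd (hHP' h) h8.2
        · intro hs x hx
          have hmks : ((s * x : G) : G ⧸ H) = (x : G ⧸ H) := by
            rw [QuotientGroup.mk_mul, (QuotientGroup.eq_one_iff s).mpr hs, one_mul]
          exact ⟨by rw [hmks]; exact hx.1, by rw [hmks]; exact hx.2⟩
      refine ⟨α, ?_, hα⟩
      ext t
      constructor
      · rintro ⟨s, hsH, rfl⟩
        rw [SetLike.mem_coe, ← hstab' (α s)]
        intro x' hx'
        obtain ⟨x, hx, rfl⟩ : ∃ x ∈ X, α x = x' := by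
          rw [← hα] at hx'; exact hx'
        rw [← map_mul]
        rw [← hα]
        exact Set.mem_image_of_mem _ ((hstab s).mpr hsH x hx)
      · intro htH
        rw [SetLike.mem_coe, ← hstab' t] at htH
        refine ⟨α.symm t, ?_, by simp⟩
        rw [SetLike.mem_coe, ← hstab (α.symm t)]
        intro x hx
        have hx' : α x ∈ X' := by
          rw [← hα]; exact Set.mem_image_of_mem _ hx
        have h10 : t * α x ∈ X' := htH _ hx'
        have h11 : α.symm (t * α x) ∈ X := by
          rw [← hα] at h10
          obtain ⟨w, hw, hw2⟩ := h10
          rw [← hw2]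
          simpa using hw
        rw [map_mul] at h11
        simpa using h11
  -- descend σ to the quotient
  have hmapH : H.map (σ : G →* G) = H := by
    apply SetLike.coe_injective
    rw [Subgroup.coe_map]
    exact hσH
  refine ⟨QuotientGroup.congr H H σ hmapH, ?_⟩
  ext q
  constructor
  · rintro ⟨p, hpS, rfl⟩
    obtain ⟨g, rfl⟩ := QuotientGroup.mk_surjective p
    rw [QuotientGroup.congr_mk]
    by_cases hg1 : (g : G ⧸ H) = 1
    · have hgH : g ∈ H := (QuotientGroup.eq_one_iff g).mp hg1
      have hσg : σ g ∈ H := by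
        have : σ g ∈ (σ : G → G) '' (H : Set G) := Set.mem_image_of_mem _ hgH
        rw [hσH] at this
        exact this
      rw [(QuotientGroup.eq_one_iff (σ g)).mpr hσg]
      exact h1iff.mp (by rwa [hg1] at hpS)
    · have hgX : g ∈ X := ⟨hpS, hg1⟩
      have hσg : σ g ∈ X' := by
        rw [← hσX]
        exact Set.mem_image_of_mem _ hgX
      exact hσg.1
  · intro hq
    obtain ⟨g', rfl⟩ := QuotientGroup.mk_surjective q
    by_cases hg1 : (g' : G ⧸ H) = 1
    · refine ⟨(1 : G ⧸ H), h1iff.mpr (by rwa [hg1] at hq), ?_⟩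
      rw [hg1, map_one]
    · have hgX' : g' ∈ X' := ⟨hq, hg1⟩
      have hgX : σ.symm g' ∈ X := by
        rw [← hσX] at hgX'
        obtain ⟨w, hw, hw2⟩ := hgX'
        rw [← hw2]
        simpa using hw
      refine ⟨((σ.symm g' : G) : G ⧸ H), hgX.1, ?_⟩
      rw [QuotientGroup.congr_mk]
      simp
end

section
/- Every quotient group of a finite CI-group with respect to graphs is a CI-group with respect to graphs. That is, if G is a finite group such that for all inverse-closed subsets S, S' ⊆ G, Cay(G,S) ≅ Cay(G,S') implies α(S) = S' for some α ∈ Aut(G), and H is a normal subgroup of G, then G/H has the same property for inverse-closed subsets of G/H. -/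
open Equiv

section CIQuotientAux

variable {G : Type*} [Group G]

lemma ciq_mem_of_eqimg {A : Set G} {k x : G}
    (hk : (fun y => k * y) '' A = A) (hx : x ∈ A) : k * x ∈ A := by
  rw [← hk]; exact ⟨x, hx, rfl⟩

/-- Key dichotomy: a symmetric set `A` containing `1` and the set `Aᶜ ∪ {1}` cannot both
have nontrivial left stabilizers. -/
lemma ciq_stab_dichotomy {A : Set G} (hA : A⁻¹ = A) (h1 : (1 : G) ∈ A)
    {k u : G} (hk : (fun y => k * y) '' A = A)
    (hu : (fun y => u * y) '' (Aᶜ ∪ {1}) = Aᶜ ∪ {1}) (hk1 : k ≠ 1) (hu1 : u ≠ 1) :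
    False := by
  have hinvA : ∀ x : G, x ∈ A → x⁻¹ ∈ A := by
    intro x hx
    rw [← hA]
    simpa [Set.mem_inv] using hx
  have hkA : k ∈ A := by simpa using ciq_mem_of_eqimg hk h1
  have h1c : (1 : G) ∈ Aᶜ ∪ {1} := Or.inr rfl
  have huA : u ∈ Aᶜ := by
    have hu2 : u ∈ Aᶜ ∪ {1} := by simpa using ciq_mem_of_eqimg hu h1c
    rcases hu2 with h | h
    · exact h
    · exact absurd h hu1
  have hukA : u * k ∈ A := by
    by_contra hcon
    have hmem : u * k ∈ Aᶜ ∪ {1} := Or.inl hcon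
    rw [← hu] at hmem
    obtain ⟨w, hw, hweq⟩ := hmem
    have hwk : w = k := mul_left_cancel hweq
    subst hwk
    rcases hw with h | h
    · exact h hkA
    · exact hk1 h
  have h2 : k * (u * k)⁻¹ ∈ A := ciq_mem_of_eqimg hk (hinvA _ hukA)
  have h3 : u⁻¹ ∈ A := by
    have hcalc : k * (u * k)⁻¹ = u⁻¹ := by
      rw [mul_inv_rev]; group
    rwa [hcalc] at h2
  exact huA (by simpa using hinvA _ h3)

variable (H : Subgroup G) [H.Normal]

/-- A lift of a permutation of `G ⧸ H` to a permutation of `G`, mapping each fiber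
to the corresponding fiber. -/
noncomputable def ciqLfun (e : Perm (G ⧸ H)) (g : G) : G :=
  (e (QuotientGroup.mk g)).out * (((QuotientGroup.mk g : G ⧸ H)).out⁻¹ * g)

lemma ciqLfun_mk (e : Perm (G ⧸ H)) (g : G) :
    (QuotientGroup.mk (ciqLfun H e g) : G ⧸ H) = e (QuotientGroup.mk g) := by
  unfold ciqLfun
  rw [QuotientGroup.mk_mul, QuotientGroup.mk_mul, QuotientGroup.mk_inv,
    QuotientGroup.out_eq', QuotientGroup.out_eq', inv_mul_cancel, mul_one]

lemma ciqLfun_lfun (e : Perm (G ⧸ H)) (g : G) : ciqLfun H e⁻¹ (ciqLfun H e g) = g := by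
  have h := ciqLfun_mk H e g
  rw [show ciqLfun H e⁻¹ (ciqLfun H e g)
      = (e⁻¹ (QuotientGroup.mk (ciqLfun H e g))).out *
        ((QuotientGroup.mk (ciqLfun H e g) : G ⧸ H).out⁻¹ * ciqLfun H e g) from rfl,
    h, Perm.inv_def, Equiv.symm_apply_apply]
  rw [show ciqLfun H e g
      = (e (QuotientGroup.mk g)).out * (((QuotientGroup.mk g : G ⧸ H)).out⁻¹ * g) from rfl]
  group

/-- The lifted permutation as a `Perm G`. -/
noncomputable def ciqLiftPerm (e : Perm (G ⧸ H)) : Perm G where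
  toFun := ciqLfun H e
  invFun := ciqLfun H e⁻¹
  left_inv := ciqLfun_lfun H e
  right_inv := by
    intro g
    have h := ciqLfun_lfun H e⁻¹ g
    simpa using h

lemma ciqLiftPerm_mk (e : Perm (G ⧸ H)) (g : G) :
    (QuotientGroup.mk (ciqLiftPerm H e g) : G ⧸ H) = e (QuotientGroup.mk g) :=
  ciqLfun_mk H e g

/-- Main auxiliary step: if the left stabilizer of `A` is trivial then the CI property
of `G` descends to the pair `(A, B)` in the quotient. -/
lemma ciq_aux [Fintype G]
    (hCI : ∀ S S' : Set G, S⁻¹ = S → S'⁻¹ = S' →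
      (∃ e : Perm G, ∀ a b : G, a⁻¹ * b ∈ S ↔ (e a)⁻¹ * (e b) ∈ S') →
      ∃ α : G ≃* G, α '' S = S')
    {A B : Set (G ⧸ H)} (hA : A⁻¹ = A) (hB : B⁻¹ = B)
    (h1A : (1 : G ⧸ H) ∈ A) (h1B : (1 : G ⧸ H) ∈ B)
    (hstab : ∀ k : G ⧸ H, (fun y => k * y) '' A = A → k = 1)
    (e : Perm (G ⧸ H)) (he : ∀ a b : G ⧸ H, a⁻¹ * b ∈ A ↔ (e a)⁻¹ * (e b) ∈ B) :
    ∃ α : (G ⧸ H) ≃* (G ⧸ H), α '' A = B := by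
  classical
  set X : Set G := (QuotientGroup.mk : G → G ⧸ H) ⁻¹' A with hXdef
  set Y : Set G := (QuotientGroup.mk : G → G ⧸ H) ⁻¹' B with hYdef
  have hXmem : ∀ x : G, x⁻¹ ∈ X ↔ x ∈ X := by
    intro x
    rw [hXdef]
    simp only [Set.mem_preimage, QuotientGroup.mk_inv]
    constructor
    · intro h
      have h2 : (QuotientGroup.mk x : G ⧸ H) ∈ A⁻¹ := by simpa [Set.mem_inv] using h
      rwa [hA] at h2
    · intro h
      have h2 : (QuotientGroup.mk x : G ⧸ H) ∈ A⁻¹ := by rwa [hA]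
      simpa [Set.mem_inv] using h2
  have hYmem : ∀ x : G, x⁻¹ ∈ Y ↔ x ∈ Y := by
    intro x
    rw [hYdef]
    simp only [Set.mem_preimage, QuotientGroup.mk_inv]
    constructor
    · intro h
      have h2 : (QuotientGroup.mk x : G ⧸ H) ∈ B⁻¹ := by simpa [Set.mem_inv] using h
      rwa [hB] at h2
    · intro h
      have h2 : (QuotientGroup.mk x : G ⧸ H) ∈ B⁻¹ := by rwa [hB]
      simpa [Set.mem_inv] using h2
  have hXsym : (X \ {1})⁻¹ = X \ {1} := by
    ext x
    simp only [Set.mem_inv, Set.mem_diff, Set.mem_singleton_iff]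
    constructor
    · rintro ⟨h1, h2⟩
      exact ⟨(hXmem x).1 h1, fun hx => h2 (by rw [hx, inv_one])⟩
    · rintro ⟨h1, h2⟩
      exact ⟨(hXmem x).2 h1, fun hx => h2 (by rwa [inv_eq_one] at hx)⟩
  have hYsym : (Y \ {1})⁻¹ = Y \ {1} := by
    ext x
    simp only [Set.mem_inv, Set.mem_diff, Set.mem_singleton_iff]
    constructor
    · rintro ⟨h1, h2⟩
      exact ⟨(hYmem x).1 h1, fun hx => h2 (by rw [hx, inv_one])⟩
    · rintro ⟨h1, h2⟩
      exact ⟨(hYmem x).2 h1, fun hx => h2 (by rwa [inv_eq_one] at hx)⟩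
  have hcond : ∀ a b : G, a⁻¹ * b ∈ X \ {1} ↔
      ((ciqLiftPerm H e) a)⁻¹ * ((ciqLiftPerm H e) b) ∈ Y \ {1} := by
    intro a b
    have hmk1 : (QuotientGroup.mk (a⁻¹ * b) : G ⧸ H)
        = (QuotientGroup.mk a)⁻¹ * QuotientGroup.mk b := by
      rw [QuotientGroup.mk_mul, QuotientGroup.mk_inv]
    have hmk2 : (QuotientGroup.mk ((ciqLiftPerm H e a)⁻¹ * ciqLiftPerm H e b) : G ⧸ H)
        = (e (QuotientGroup.mk a))⁻¹ * e (QuotientGroup.mk b) := by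
      rw [QuotientGroup.mk_mul, QuotientGroup.mk_inv, ciqLiftPerm_mk, ciqLiftPerm_mk]
    have hmemiff : a⁻¹ * b ∈ X ↔ (ciqLiftPerm H e a)⁻¹ * ciqLiftPerm H e b ∈ Y := by
      rw [hXdef, hYdef]
      simp only [Set.mem_preimage]
      rw [hmk1, hmk2]
      exact he _ _
    have hneiff : a⁻¹ * b = 1 ↔ (ciqLiftPerm H e a)⁻¹ * ciqLiftPerm H e b = 1 := by
      rw [inv_mul_eq_one, inv_mul_eq_one]
      exact ⟨fun h => by rw [h], fun h => (ciqLiftPerm H e).injective h⟩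
    simp only [Set.mem_diff, Set.mem_singleton_iff]
    exact and_congr hmemiff (not_congr hneiff)
  obtain ⟨σ, hσ⟩ := hCI (X \ {1}) (Y \ {1}) hXsym hYsym ⟨ciqLiftPerm H e, hcond⟩
  have h1X : (1 : G) ∈ X := by
    rw [hXdef]
    simpa using h1A
  have h1Y : (1 : G) ∈ Y := by
    rw [hYdef]
    simpa using h1B
  have hσX : σ '' X = Y := by
    have hx : insert (1 : G) (X \ {1}) = X := by
      rw [Set.insert_diff_singleton]; exact Set.insert_eq_of_mem h1X
    have hy : insert (1 : G) (Y \ {1}) = Y := by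
      rw [Set.insert_diff_singleton]; exact Set.insert_eq_of_mem h1Y
    rw [← hx, ← hy, Set.image_insert_eq, hσ, map_one]
  have hσsymmY : σ.symm '' Y = X := by
    rw [← hσX, Set.image_image]
    have hid : (fun x => σ.symm (σ x)) = fun x : G => x := by
      funext x; simp
    rw [hid, Set.image_id']
  have hHY : ∀ h : G, h ∈ H → (fun y => h * y) '' Y = Y := by
    intro h hh
    ext z
    simp only [Set.mem_image]
    constructor
    · rintro ⟨w, hw, rfl⟩
      show (QuotientGroup.mk (h * w) : G ⧸ H) ∈ B
      rw [QuotientGroup.mk_mul, (QuotientGroup.eq_one_iff h).2 hh, one_mul]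
      exact hw
    · intro hz
      refine ⟨h⁻¹ * z, ?_, by group⟩
      show (QuotientGroup.mk (h⁻¹ * z) : G ⧸ H) ∈ B
      rw [QuotientGroup.mk_mul, QuotientGroup.mk_inv, (QuotientGroup.eq_one_iff h).2 hh,
        inv_one, one_mul]
      exact hz
  have hkey : ∀ h : G, h ∈ H → σ.symm h ∈ H := by
    intro h hh
    have hX2 : (fun y => σ.symm h * y) '' X = X := by
      conv_lhs => rw [← hσsymmY]
      rw [Set.image_image]
      have e1 : (fun y => σ.symm h * σ.symm y) = fun y => σ.symm (h * y) := by
        funext y; rw [map_mul]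
      rw [e1,
        show (fun y => σ.symm (h * y)) '' Y = σ.symm '' ((fun y => h * y) '' Y) from
          (Set.image_image _ _ _).symm,
        hHY h hh, hσsymmY]
    have hXA : (QuotientGroup.mk : G → G ⧸ H) '' X = A :=
      Set.image_preimage_eq A QuotientGroup.mk_surjective
    have hA2 : (fun y => (QuotientGroup.mk (σ.symm h) : G ⧸ H) * y) '' A = A := by
      conv_lhs => rw [← hXA]
      rw [Set.image_image]
      have e2 : (fun x : G => (QuotientGroup.mk (σ.symm h) : G ⧸ H) * QuotientGroup.mk x)
          = fun x : G => (QuotientGroup.mk (σ.symm h * x) : G ⧸ H) := by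
        funext x; rw [QuotientGroup.mk_mul]
      rw [e2,
        show (fun x : G => (QuotientGroup.mk (σ.symm h * x) : G ⧸ H)) '' X
            = (QuotientGroup.mk : G → G ⧸ H) '' ((fun x => σ.symm h * x) '' X) from
          (Set.image_image _ _ _).symm,
        hX2, hXA]
    exact (QuotientGroup.eq_one_iff _).1 (hstab _ hA2)
  have hmapsymm : Subgroup.map σ.symm.toMonoidHom H = H := by
    apply SetLike.ext'
    rw [Subgroup.coe_map]
    simp only [MulEquiv.coe_toMonoidHom]
    have hsub : ⇑σ.symm '' (H : Set G) ⊆ (H : Set G) := by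
      rintro x ⟨h, hh, rfl⟩; exact hkey h hh
    have hcard : (H : Set G).ncard ≤ (⇑σ.symm '' (H : Set G)).ncard := by
      rw [Set.ncard_image_of_injective _ σ.symm.injective]
    exact Set.eq_of_subset_of_ncard_le hsub hcard (Set.toFinite _)
  have hmap : Subgroup.map (σ : G →* G) H = H := by
    conv_lhs => rw [← hmapsymm]
    rw [Subgroup.map_map]
    have hid : ((σ : G →* G).comp σ.symm.toMonoidHom) = MonoidHom.id G := by
      ext x; simp
    rw [hid, Subgroup.map_id]
  refine ⟨QuotientGroup.congr H H σ hmap, ?_⟩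
  have hXA : (QuotientGroup.mk : G → G ⧸ H) '' X = A :=
    Set.image_preimage_eq A QuotientGroup.mk_surjective
  have hYB : (QuotientGroup.mk : G → G ⧸ H) '' Y = B :=
    Set.image_preimage_eq B QuotientGroup.mk_surjective
  rw [← hXA, ← hYB, ← hσX, Set.image_image, Set.image_image]
  apply Set.image_congr'
  intro x
  exact QuotientGroup.congr_mk H H σ hmap x

end CIQuotientAux

/-- A quotient of a finite CI-group with respect to graphs (inverse-closed connection
sets) is a CI-group with respect to graphs. -/
theorem stmt_7 {G : Type*} [Group G] [Fintype G]
    (hCI : ∀ S S' : Set G, S⁻¹ = S → S'⁻¹ = S' →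
      (∃ e : Perm G, ∀ a b : G, a⁻¹ * b ∈ S ↔ (e a)⁻¹ * (e b) ∈ S') →
      ∃ α : G ≃* G, α '' S = S')
    (H : Subgroup G) [H.Normal] :
    ∀ S S' : Set (G ⧸ H), S⁻¹ = S → S'⁻¹ = S' →
      (∃ e : Perm (G ⧸ H), ∀ a b : G ⧸ H, a⁻¹ * b ∈ S ↔ (e a)⁻¹ * (e b) ∈ S') →
      ∃ α : (G ⧸ H) ≃* (G ⧸ H), α '' S = S' := by
  intro S S' hS hS' he0
  obtain ⟨e, he⟩ := he0
  classical
  have hbit : ((1 : G ⧸ H) ∈ S) ↔ ((1 : G ⧸ H) ∈ S') := by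
    have h := he 1 1
    simpa using h
  set A : Set (G ⧸ H) := S ∪ {1} with hAdef
  set B : Set (G ⧸ H) := S' ∪ {1} with hBdef
  have h1A : (1 : G ⧸ H) ∈ A := Or.inr rfl
  have h1B : (1 : G ⧸ H) ∈ B := Or.inr rfl
  have hsymS : ∀ x : G ⧸ H, x⁻¹ ∈ S ↔ x ∈ S := by
    intro x
    constructor
    · intro h
      have h2 : x ∈ S⁻¹ := by simpa [Set.mem_inv] using h
      rwa [hS] at h2
    · intro h
      have h2 : x ∈ S⁻¹ := by rwa [hS]
      simpa [Set.mem_inv] using h2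
  have hsymS' : ∀ x : G ⧸ H, x⁻¹ ∈ S' ↔ x ∈ S' := by
    intro x
    constructor
    · intro h
      have h2 : x ∈ S'⁻¹ := by simpa [Set.mem_inv] using h
      rwa [hS'] at h2
    · intro h
      have h2 : x ∈ S'⁻¹ := by rwa [hS']
      simpa [Set.mem_inv] using h2
  have hA : A⁻¹ = A := by
    ext x
    simp only [Set.mem_inv, hAdef, Set.mem_union, Set.mem_singleton_iff, inv_eq_one]
    rw [hsymS x]
  have hB : B⁻¹ = B := by
    ext x
    simp only [Set.mem_inv, hBdef, Set.mem_union, Set.mem_singleton_iff, inv_eq_one]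
    rw [hsymS' x]
  have hone : ∀ a b : G ⧸ H, (a⁻¹ * b = 1) ↔ ((e a)⁻¹ * (e b) = 1) := by
    intro a b
    rw [inv_mul_eq_one, inv_mul_eq_one]
    exact ⟨fun h => by rw [h], fun h => e.injective h⟩
  have heA : ∀ a b : G ⧸ H, a⁻¹ * b ∈ A ↔ (e a)⁻¹ * (e b) ∈ B := by
    intro a b
    simp only [hAdef, hBdef, Set.mem_union, Set.mem_singleton_iff]
    constructor
    · rintro (h | h)
      · exact Or.inl ((he a b).1 h)
      · exact Or.inr ((hone a b).1 h)
    · rintro (h | h)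
      · exact Or.inl ((he a b).2 h)
      · exact Or.inr ((hone a b).2 h)
  by_cases hstab : ∀ k : G ⧸ H, (fun y => k * y) '' A = A → k = 1
  · obtain ⟨α, hα⟩ := ciq_aux H hCI hA hB h1A h1B hstab e heA
    refine ⟨α, ?_⟩
    by_cases h1S : (1 : G ⧸ H) ∈ S
    · have h1S' := hbit.1 h1S
      have hA2 : A = S := by
        rw [hAdef]
        exact Set.union_eq_self_of_subset_right (by simpa using h1S)
      have hB2 : B = S' := by
        rw [hBdef]
        exact Set.union_eq_self_of_subset_right (by simpa using h1S')
      rw [← hA2, ← hB2]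
      exact hα
    · have h1S' : (1 : G ⧸ H) ∉ S' := fun h => h1S (hbit.2 h)
      have hA2 : S = A \ {1} := by
        ext x
        simp only [hAdef, Set.mem_diff, Set.mem_union, Set.mem_singleton_iff]
        constructor
        · intro hx
          exact ⟨Or.inl hx, fun h => h1S (h ▸ hx)⟩
        · rintro ⟨h | h, hne⟩
          · exact h
          · exact absurd h hne
      have hB2 : S' = B \ {1} := by
        ext x
        simp only [hBdef, Set.mem_diff, Set.mem_union, Set.mem_singleton_iff]
        constructor
        · intro hx
          exact ⟨Or.inl hx, fun h => h1S' (h ▸ hx)⟩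
        · rintro ⟨h | h, hne⟩
          · exact h
          · exact absurd h hne
      rw [hA2, hB2, Set.image_diff α.injective, hα, Set.image_singleton, map_one]
  · push_neg at hstab
    obtain ⟨k, hk, hk1⟩ := hstab
    set A' : Set (G ⧸ H) := Aᶜ ∪ {1} with hA'def
    set B' : Set (G ⧸ H) := Bᶜ ∪ {1} with hB'def
    have h1A' : (1 : G ⧸ H) ∈ A' := Or.inr rfl
    have h1B' : (1 : G ⧸ H) ∈ B' := Or.inr rfl
    have hmemA : ∀ x : G ⧸ H, x⁻¹ ∈ A ↔ x ∈ A := by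
      intro x
      constructor
      · intro h
        have h2 : x ∈ A⁻¹ := by simpa [Set.mem_inv] using h
        rwa [hA] at h2
      · intro h
        have h2 : x ∈ A⁻¹ := by rwa [hA]
        simpa [Set.mem_inv] using h2
    have hmemB : ∀ x : G ⧸ H, x⁻¹ ∈ B ↔ x ∈ B := by
      intro x
      constructor
      · intro h
        have h2 : x ∈ B⁻¹ := by simpa [Set.mem_inv] using h
        rwa [hB] at h2
      · intro h
        have h2 : x ∈ B⁻¹ := by rwa [hB]
        simpa [Set.mem_inv] using h2
    have hA' : A'⁻¹ = A' := by
      ext x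
      simp only [hA'def, Set.mem_inv, Set.mem_union, Set.mem_compl_iff,
        Set.mem_singleton_iff, inv_eq_one]
      rw [hmemA x]
    have hB' : B'⁻¹ = B' := by
      ext x
      simp only [hB'def, Set.mem_inv, Set.mem_union, Set.mem_compl_iff,
        Set.mem_singleton_iff, inv_eq_one]
      rw [hmemB x]
    have hstab' : ∀ u : G ⧸ H, (fun y => u * y) '' A' = A' → u = 1 := by
      intro u hu
      by_contra hu1
      exact ciq_stab_dichotomy hA h1A hk hu hk1 hu1
    have heA' : ∀ a b : G ⧸ H, a⁻¹ * b ∈ A' ↔ (e a)⁻¹ * (e b) ∈ B' := by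
      intro a b
      simp only [hA'def, hB'def, Set.mem_union, Set.mem_compl_iff, Set.mem_singleton_iff]
      have h1 := heA a b
      have h2 := hone a b
      tauto
    obtain ⟨α, hα⟩ := ciq_aux H hCI hA' hB' h1A' h1B' hstab' e heA'
    refine ⟨α, ?_⟩
    have hcompl : α '' (A'ᶜ) = B'ᶜ := by
      rw [Set.image_compl_eq α.bijective, hα]
    have hAc : A'ᶜ = S \ {1} := by
      rw [hA'def, Set.compl_union, compl_compl, hAdef]
      ext x
      simp only [Set.mem_inter_iff, Set.mem_union, Set.mem_compl_iff,
        Set.mem_singleton_iff, Set.mem_diff]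
      tauto
    have hBc : B'ᶜ = S' \ {1} := by
      rw [hB'def, Set.compl_union, compl_compl, hBdef]
      ext x
      simp only [Set.mem_inter_iff, Set.mem_union, Set.mem_compl_iff,
        Set.mem_singleton_iff, Set.mem_diff]
      tauto
    rw [hAc, hBc] at hcompl
    by_cases h1S : (1 : G ⧸ H) ∈ S
    · have h1S' := hbit.1 h1S
      have hins : S = insert 1 (S \ {1}) := by
        rw [Set.insert_diff_singleton]
        exact (Set.insert_eq_of_mem h1S).symm
      rw [hins, Set.image_insert_eq, map_one, hcompl, Set.insert_diff_singleton,
        Set.insert_eq_of_mem h1S']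
    · have h1S' : (1 : G ⧸ H) ∉ S' := fun h => h1S (hbit.2 h)
      have hs : S \ {1} = S := Set.diff_singleton_eq_self h1S
      have hs' : S' \ {1} = S' := Set.diff_singleton_eq_self h1S'
      rwa [hs, hs'] at hcompl
end
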